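/- For integers n_1, n_2 ≥ 2, let f be defined on [n_1]×[n_2] by f(i,j) = (i-1)n_2 + j if i and j are both odd; (i-1)n_2 + (n_2+1-j) if i and j are both even; (n_1-i)n_2 + j + ε if i is odd and j is even; and (n_1-i)n_2 + (n_2+1-j+ε) if i is even and j is odd, where ε = 1 if n_1 is even and n_2 is odd and ε = 0 otherwise. Then for every (i,j) ∈ [n_1-1]×[n_2-1], f(i,j) + f(i,j+1) + f(i+1,j) + f(i+1,j+1) = 2(n_1 n_2 + 1 + ε). -/

import Mathlib

/-- The grid graph `Grid(n 0, …, n (d-1))`: vertices are tuples whose `i`-th coordinate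
ranges over a set of size `n i` (we use `Fin (n i) = {0, …, n i - 1}`, corresponding to the
coordinate `[n i] = {1, …, n i}` via `v ↦ v + 1`); two vertices are adjacent iff they differ
by exactly one in one coordinate and agree in all others. -/
def gridGraph {d : ℕ} (n : Fin d → ℕ) : SimpleGraph (∀ i, Fin (n i)) where
  Adj x y := ∃ i, ((x i : ℕ) + 1 = (y i : ℕ) ∨ (y i : ℕ) + 1 = (x i : ℕ)) ∧
    ∀ j, j ≠ i → x j = y j
  symm := by
    constructor
    rintro x y ⟨i, h, hj⟩
    exact ⟨i, h.symm, fun j hji => (hj j hji).symm⟩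
  loopless := by
    constructor
    rintro x ⟨i, h, -⟩
    rcases h with h | h <;> omega

/-- `f` is an `H`-magic vertex labeling of `G` with `H`-magic sum `c`:
a bijection from the vertices of `G` onto `{1, …, |V|}` such that the vertex labels of every
subgraph of `G` isomorphic to `H` sum to `c`. -/
def IsMagicVertexLabeling {V : Type*} [Fintype V] {W : Type*}
    (G : SimpleGraph V) (H : SimpleGraph W) (f : V → ℤ) (c : ℤ) : Prop :=
  Set.BijOn f Set.univ (Set.Icc 1 (Fintype.card V : ℤ)) ∧
  ∀ G' : G.Subgraph, Nonempty (G'.coe ≃g H) → ∑ᶠ v ∈ G'.verts, f v = c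

/-- `g` is an `H`-magic edge labeling of `G` with `H`-magic sum `c`:
a bijection from the edges of `G` onto `{1, …, |E|}` such that the edge labels of every
subgraph of `G` isomorphic to `H` sum to `c`. -/
def IsMagicEdgeLabeling {V : Type*} [Fintype V] {W : Type*}
    (G : SimpleGraph V) (H : SimpleGraph W) (g : Sym2 V → ℤ) (c : ℤ) : Prop :=
  Set.BijOn g G.edgeSet (Set.Icc 1 (G.edgeSet.ncard : ℤ)) ∧
  ∀ G' : G.Subgraph, Nonempty (G'.coe ≃g H) → ∑ᶠ e ∈ G'.edgeSet, g e = c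

/-- `G` admits an `H`-covering: every edge of `G` belongs to at least one subgraph of `G`
isomorphic to `H`. -/
def AdmitsCovering {V W : Type*} (G : SimpleGraph V) (H : SimpleGraph W) : Prop :=
  ∀ e ∈ G.edgeSet, ∃ G' : G.Subgraph, e ∈ G'.edgeSet ∧ Nonempty (G'.coe ≃g H)

/-- `(Fv, Fe)` is an `H`-supermagic labeling of `G` with `H`-supermagic sum `c`:
the vertex part is a bijection onto `{1, …, |V|}`, the edge part is a bijection from the
edges onto `{|V|+1, …, |V|+|E|}` (together a bijection `V ∪ E → {1, …, |V|+|E|}` mapping `V`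
onto `{1, …, |V|}`), and the labels of every subgraph isomorphic to `H` sum to `c`. -/
def IsSupermagicLabeling {V : Type*} [Fintype V] {W : Type*}
    (G : SimpleGraph V) (H : SimpleGraph W) (Fv : V → ℤ) (Fe : Sym2 V → ℤ) (c : ℤ) : Prop :=
  Set.BijOn Fv Set.univ (Set.Icc 1 (Fintype.card V : ℤ)) ∧
  Set.BijOn Fe G.edgeSet
    (Set.Icc ((Fintype.card V : ℤ) + 1) ((Fintype.card V : ℤ) + (G.edgeSet.ncard : ℤ))) ∧
  ∀ G' : G.Subgraph, Nonempty (G'.coe ≃g H) →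
    (∑ᶠ v ∈ G'.verts, Fv v) + (∑ᶠ e ∈ G'.edgeSet, Fe e) = c

/-- `G` is `H`-supermagic with `H`-supermagic sum `c`. -/
def IsSupermagic {V : Type*} [Fintype V] {W : Type*}
    (G : SimpleGraph V) (H : SimpleGraph W) (c : ℤ) : Prop :=
  AdmitsCovering G H ∧ ∃ Fv Fe, IsSupermagicLabeling G H Fv Fe c

/-- for the explicitly defined `f` on `[n₁] × [n₂]`, every unit square
`(i,j), (i,j+1), (i+1,j), (i+1,j+1)` with `(i,j) ∈ [n₁-1] × [n₂-1]` has label sum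
`2(n₁n₂ + 1 + ε)`. -/
theorem base_case_vertex_square_sum (n₁ n₂ : ℤ) (h₁ : 2 ≤ n₁) (h₂ : 2 ≤ n₂) (ε : ℤ)
    (hε : ε = if Even n₁ ∧ Odd n₂ then 1 else 0) (f : ℤ → ℤ → ℤ)
    (hf : ∀ i j : ℤ, 1 ≤ i → i ≤ n₁ → 1 ≤ j → j ≤ n₂ →
      f i j =
        if Odd i ∧ Odd j then (i - 1) * n₂ + j
        else if Even i ∧ Even j then (i - 1) * n₂ + (n₂ + 1 - j)
        else if Odd i then (n₁ - i) * n₂ + j + ε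
        else (n₁ - i) * n₂ + (n₂ + 1 - j + ε)) :
    ∀ i j : ℤ, 1 ≤ i → i ≤ n₁ - 1 → 1 ≤ j → j ≤ n₂ - 1 →
      f i j + f i (j + 1) + f (i + 1) j + f (i + 1) (j + 1) = 2 * (n₁ * n₂ + 1 + ε) := by
  intro i j hi1 hi2 hj1 hj2
  have e1 := hf i j (by omega) (by omega) (by omega) (by omega)
  have e2 := hf i (j + 1) (by omega) (by omega) (by omega) (by omega)
  have e3 := hf (i + 1) j (by omega) (by omega) (by omega) (by omega)
  have e4 := hf (i + 1) (j + 1) (by omega) (by omega) (by omega) (by omega)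
  rcases Int.even_or_odd i with hi | hi <;> rcases Int.even_or_odd j with hj | hj
  · simp only [← Int.not_even_iff_odd, Int.even_add_one, hi, hj, not_true, not_not,
      not_false_eq_true, if_true, if_false, true_and, and_true, false_and, and_false,
      and_self] at e1 e2 e3 e4
    linarith
  · have hj' : ¬ Even j := Int.not_even_iff_odd.mpr hj
    simp only [← Int.not_even_iff_odd, Int.even_add_one, hi, hj', not_true, not_not,
      not_false_eq_true, if_true, if_false, true_and, and_true, false_and, and_false,
      and_self] at e1 e2 e3 e4
    linarith
  · have hi' : ¬ Even i := Int.not_even_iff_odd.mpr hi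
    simp only [← Int.not_even_iff_odd, Int.even_add_one, hi', hj, not_true, not_not,
      not_false_eq_true, if_true, if_false, true_and, and_true, false_and, and_false,
      and_self] at e1 e2 e3 e4
    linarith
  · have hi' : ¬ Even i := Int.not_even_iff_odd.mpr hi
    have hj' : ¬ Even j := Int.not_even_iff_odd.mpr hj
    simp only [← Int.not_even_iff_odd, Int.even_add_one, hi', hj', not_true, not_not,
      not_false_eq_true, if_true, if_false, true_and, and_true, false_and, and_false,
      and_self] at e1 e2 e3 e4
    linarith
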